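/- Chain rule: Let f : ℍ → ℍ be H-differentiable at z⁰ ∈ ℍ with H-derivative d, set w⁰ = f(z⁰), and let F : ℍ → ℍ be H-differentiable at w⁰ via witness sequences A, B : ℕ → ℍ (i.e. ∑_k ‖A k‖ · ‖B k‖ < ∞ and F(w⁰ + k) − F(w⁰) = ∑_j (A j) · k · (B j) + ω(k) with ‖ω(k)‖/‖k‖ → 0 as k → 0). Then the composite z ↦ F(f(z)) is H-differentiable at z⁰ with H-derivative ∑_j (A j) · d · (B j). -/

import Mathlib

open scoped Quaternion
open Filter Topology

/-- A function `f : ℍ → ℍ` is H-differentiable at `z₀` with H-derivative `d` if there exist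
sequences of quaternions `A, B` with `∑ ‖A k‖ * ‖B k‖ < ∞` such that
`f (z₀ + h) - f z₀ = ∑' k, A k * h * B k + ω h` with `‖ω h‖ / ‖h‖ → 0` as `h → 0`,
and `d = ∑' k, A k * B k`. -/
def HDiffAt (f : ℍ[ℝ] → ℍ[ℝ]) (z₀ d : ℍ[ℝ]) : Prop :=
  ∃ A B : ℕ → ℍ[ℝ],
    (Summable fun k => ‖A k‖ * ‖B k‖) ∧
    Filter.Tendsto
      (fun h : ℍ[ℝ] => ‖f (z₀ + h) - f z₀ - ∑' k, A k * h * B k‖ / ‖h‖)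
      (𝓝[≠] (0 : ℍ[ℝ])) (𝓝 0) ∧
    d = ∑' k, A k * B k

set_option maxHeartbeats 1000000

def pairE : ℕ ≃ ℕ × ℕ := (Denumerable.eqv (ℕ × ℕ)).symm

lemma aux_summable (A B : ℕ → ℍ[ℝ]) (hAB : Summable fun j => ‖A j‖ * ‖B j‖) (x : ℍ[ℝ]) :
    Summable fun j => A j * x * B j := by
  apply Summable.of_norm
  have : (fun j => ‖A j * x * B j‖) = fun j => (‖A j‖ * ‖B j‖) * ‖x‖ := by
    funext j; simp [norm_mul]; ring
  rw [this]
  exact hAB.mul_right _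

lemma aux_norm_le (A B : ℕ → ℍ[ℝ]) (hAB : Summable fun j => ‖A j‖ * ‖B j‖) (x : ℍ[ℝ]) :
    ‖∑' j, A j * x * B j‖ ≤ (∑' j, ‖A j‖ * ‖B j‖) * ‖x‖ := by
  calc ‖∑' j, A j * x * B j‖ ≤ ∑' j, ‖A j * x * B j‖ := by
        apply norm_tsum_le_tsum_norm
        have : (fun j => ‖A j * x * B j‖) = fun j => (‖A j‖ * ‖B j‖) * ‖x‖ := by
          funext j; simp [norm_mul]; ring
        rw [this]; exact hAB.mul_right _
    _ = (∑' j, ‖A j‖ * ‖B j‖) * ‖x‖ := by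
        rw [← tsum_mul_right]
        congr 1; funext j; simp [norm_mul]; ring

lemma aux_double (A B A' B' : ℕ → ℍ[ℝ])
    (hAB : Summable fun j => ‖A j‖ * ‖B j‖)
    (hA'B' : Summable fun i => ‖A' i‖ * ‖B' i‖) (x : ℍ[ℝ]) :
    (∑' n : ℕ, (A (pairE n).1 * A' (pairE n).2) * x *
      (B' (pairE n).2 * B (pairE n).1))
    = ∑' j, A j * (∑' i, A' i * x * B' i) * B j := by
  set g : ℕ × ℕ → ℍ[ℝ] := fun p => A p.1 * (A' p.2 * x * B' p.2) * B p.1 with hg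
  have hgs : Summable g := by
    apply Summable.of_norm
    have : (fun p => ‖g p‖) =
        fun p : ℕ × ℕ => (‖A p.1‖ * ‖B p.1‖) * ((‖A' p.2‖ * ‖B' p.2‖) * ‖x‖) := by
      funext p; simp [hg, norm_mul]; ring
    rw [this]
    exact Summable.mul_of_nonneg (f := fun j => ‖A j‖ * ‖B j‖)
      (g := fun i => ‖A' i‖ * ‖B' i‖ * ‖x‖) hAB (hA'B'.mul_right ‖x‖)
      (fun j => mul_nonneg (norm_nonneg _) (norm_nonneg _))
      (fun i => mul_nonneg (mul_nonneg (norm_nonneg _) (norm_nonneg _)) (norm_nonneg _))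
  have h1 : (fun n => (A (pairE n).1 * A' (pairE n).2) * x * (B' (pairE n).2 * B (pairE n).1))
      = fun n => g (pairE n) := by
    funext n; simp only [hg]; noncomm_ring
  rw [h1, pairE.tsum_eq g, hgs.tsum_prod]
  congr 1; funext j
  calc (∑' i, g (j, i)) = ∑' i, A j * ((A' i * x * B' i) * B j) := by
        congr 1; funext i; simp only [hg]; noncomm_ring
    _ = A j * ((∑' i, A' i * x * B' i) * B j) := by rw [tsum_mul_left, tsum_mul_right]
    _ = A j * (∑' i, A' i * x * B' i) * B j := by noncomm_ring

/-- Chain rule for H-derivatives: if `F` is H-differentiable at `w⁰ = f z⁰` with witness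
sequences `A, B`, and `f` is H-differentiable at `z⁰` with H-derivative `d`, then `F ∘ f`
is H-differentiable at `z⁰` with H-derivative `∑' j, A j * d * B j`. -/
theorem hDiffAt_comp (f F : ℍ[ℝ] → ℍ[ℝ]) (z₀ d : ℍ[ℝ]) (A B : ℕ → ℍ[ℝ])
    (hf : HDiffAt f z₀ d)
    (hAB : Summable fun j => ‖A j‖ * ‖B j‖)
    (hF : Filter.Tendsto
      (fun k : ℍ[ℝ] => ‖F (f z₀ + k) - F (f z₀) - ∑' j, A j * k * B j‖ / ‖k‖)
      (𝓝[≠] (0 : ℍ[ℝ])) (𝓝 0)) :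
    HDiffAt (fun z => F (f z)) z₀ (∑' j, A j * d * B j) := by
  obtain ⟨A', B', hA'B', hf', hd⟩ := hf
  set ε : ℍ[ℝ] → ℝ := fun x => ‖F (f z₀ + x) - F (f z₀) - ∑' j, A j * x * B j‖ / ‖x‖ with hε
  set k : ℍ[ℝ] → ℍ[ℝ] := fun h => f (z₀ + h) - f z₀ with hk
  set T : ℍ[ℝ] → ℍ[ℝ] := fun h => ∑' i, A' i * h * B' i with hT
  set r : ℍ[ℝ] → ℝ := fun h => ‖f (z₀ + h) - f z₀ - ∑' i, A' i * h * B' i‖ / ‖h‖ with hr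
  set M : ℝ := ∑' j, ‖A j‖ * ‖B j‖ with hM
  set M' : ℝ := ∑' i, ‖A' i‖ * ‖B' i‖ with hM'
  refine ⟨fun n => A (pairE n).1 * A' (pairE n).2,
    fun n => B' (pairE n).2 * B (pairE n).1, ?_, ?_, ?_⟩
  · -- summability of witness norms
    have h1 : (fun n => ‖A (pairE n).1 * A' (pairE n).2‖ * ‖B' (pairE n).2 * B (pairE n).1‖)
        = fun n => ((fun p : ℕ × ℕ => (‖A p.1‖ * ‖B p.1‖) * (‖A' p.2‖ * ‖B' p.2‖)) (pairE n)) := by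
      funext n; simp [norm_mul]; ring
    rw [h1]
    have hs2 : Summable (fun p : ℕ × ℕ => (‖A p.1‖ * ‖B p.1‖) * (‖A' p.2‖ * ‖B' p.2‖)) :=
      Summable.mul_of_nonneg (f := fun j => ‖A j‖ * ‖B j‖)
        (g := fun i => ‖A' i‖ * ‖B' i‖) hAB hA'B'
        (fun j => mul_nonneg (norm_nonneg _) (norm_nonneg _))
        (fun i => mul_nonneg (norm_nonneg _) (norm_nonneg _))
    exact hs2.comp_injective pairE.injective
  · -- the limit
    have hMnn : 0 ≤ M := tsum_nonneg fun j => mul_nonneg (norm_nonneg _) (norm_nonneg _)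
    have key : ∀ h : ℍ[ℝ], h ≠ 0 →
        ‖F (f (z₀ + h)) - F (f z₀) - ∑' n : ℕ, (A (pairE n).1 * A' (pairE n).2) * h *
          (B' (pairE n).2 * B (pairE n).1)‖ / ‖h‖
          ≤ ε (k h) * (M' + r h) + M * r h := by
      intro h hh
      have hhn : (0:ℝ) < ‖h‖ := norm_pos_iff.2 hh
      rw [aux_double A B A' B' hAB hA'B' h]
      have hu : ‖k h - T h‖ = r h * ‖h‖ := by
        rw [hr, hk, hT]
        field_simp
      have hTb : ‖T h‖ ≤ M' * ‖h‖ := aux_norm_le A' B' hA'B' h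
      have hkb : ‖k h‖ ≤ M' * ‖h‖ + r h * ‖h‖ := by
        calc ‖k h‖ = ‖T h + (k h - T h)‖ := by congr 1; abel
          _ ≤ ‖T h‖ + ‖k h - T h‖ := norm_add_le _ _
          _ ≤ M' * ‖h‖ + r h * ‖h‖ := by rw [hu]; exact add_le_add_left hTb _
      have hX : ‖F (f z₀ + k h) - F (f z₀) - ∑' j, A j * (k h) * B j‖ = ε (k h) * ‖k h‖ := by
        by_cases hk0 : k h = 0
        · simp [hε, hk0]
        · rw [hε]
          exact (div_mul_cancel₀ _ (norm_ne_zero_iff.2 hk0)).symm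
      have hεnn : 0 ≤ ε (k h) := div_nonneg (norm_nonneg _) (norm_nonneg _)
      have hrnn : 0 ≤ r h := div_nonneg (norm_nonneg _) (norm_nonneg _)
      have hdecomp : F (f (z₀ + h)) - F (f z₀) - ∑' j, A j * (T h) * B j
          = (F (f z₀ + k h) - F (f z₀) - ∑' j, A j * (k h) * B j)
            + ∑' j, A j * (k h - T h) * B j := by
        have h2 : (∑' j, A j * (k h - T h) * B j)
            = (∑' j, A j * (k h) * B j) - ∑' j, A j * (T h) * B j := by
          rw [← Summable.tsum_sub (aux_summable A B hAB (k h)) (aux_summable A B hAB (T h))]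
          congr 1; funext j; noncomm_ring
        rw [h2]
        have h3 : f z₀ + k h = f (z₀ + h) := by simp [hk]
        rw [h3]; abel
      have hbound : ‖F (f (z₀ + h)) - F (f z₀) - ∑' j, A j * (T h) * B j‖
          ≤ (ε (k h) * (M' + r h) + M * r h) * ‖h‖ := by
        rw [hdecomp]
        calc ‖_ + _‖ ≤ ‖F (f z₀ + k h) - F (f z₀) - ∑' j, A j * (k h) * B j‖
              + ‖∑' j, A j * (k h - T h) * B j‖ := norm_add_le _ _
          _ ≤ ε (k h) * ‖k h‖ + M * ‖k h - T h‖ := by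
              rw [hX]; exact add_le_add_right (aux_norm_le A B hAB _) _
          _ ≤ ε (k h) * (M' * ‖h‖ + r h * ‖h‖) + M * (r h * ‖h‖) := by
              rw [hu]
              exact add_le_add_left (mul_le_mul_of_nonneg_left hkb hεnn) _
          _ = (ε (k h) * (M' + r h) + M * r h) * ‖h‖ := by ring
      rw [div_le_iff₀ hhn]
      exact hbound
    -- limits
    have hnorm0 : Tendsto (fun h : ℍ[ℝ] => ‖h‖) (𝓝[≠] (0:ℍ[ℝ])) (𝓝 0) := by
      have := (continuous_norm.tendsto (0:ℍ[ℝ])).mono_left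
        (nhdsWithin_le_nhds (s := {(0:ℍ[ℝ])}ᶜ))
      simpa using this
    have hk0 : Tendsto k (𝓝[≠] (0:ℍ[ℝ])) (𝓝 0) := by
      apply squeeze_zero_norm' (a := fun h : ℍ[ℝ] => M' * ‖h‖ + r h * ‖h‖)
      · filter_upwards [self_mem_nhdsWithin] with h hh
        have hhn : (0:ℝ) < ‖h‖ := norm_pos_iff.2 hh
        have hu : ‖k h - T h‖ = r h * ‖h‖ := by
          rw [hr, hk, hT]; field_simp
        calc ‖k h‖ = ‖T h + (k h - T h)‖ := by congr 1; abel
          _ ≤ ‖T h‖ + ‖k h - T h‖ := norm_add_le _ _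
          _ ≤ M' * ‖h‖ + r h * ‖h‖ := by
              rw [hu]; exact add_le_add_left (aux_norm_le A' B' hA'B' h) _
      · have : Tendsto (fun h : ℍ[ℝ] => M' * ‖h‖ + r h * ‖h‖) (𝓝[≠] (0:ℍ[ℝ]))
            (𝓝 (M' * 0 + 0 * 0)) :=
          ((tendsto_const_nhds.mul hnorm0).add (hf'.mul hnorm0))
        simpa using this
    have hε0 : Tendsto ε (𝓝 (0:ℍ[ℝ])) (𝓝 0) := by
      rw [← nhdsNE_sup_pure (0:ℍ[ℝ]), tendsto_sup]
      refine ⟨hF, ?_⟩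
      have h0 : ε 0 = 0 := by simp [hε]
      have := tendsto_pure_nhds ε (0:ℍ[ℝ])
      rwa [h0] at this
    have hεk : Tendsto (fun h => ε (k h)) (𝓝[≠] (0:ℍ[ℝ])) (𝓝 0) := hε0.comp hk0
    have hg : Tendsto (fun h => ε (k h) * (M' + r h) + M * r h) (𝓝[≠] (0:ℍ[ℝ])) (𝓝 0) := by
      have : Tendsto (fun h => ε (k h) * (M' + r h) + M * r h) (𝓝[≠] (0:ℍ[ℝ]))
          (𝓝 (0 * (M' + 0) + M * 0)) :=
        (hεk.mul (tendsto_const_nhds.add hf')).add (tendsto_const_nhds.mul hf')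
      simpa using this
    apply squeeze_zero' _ _ hg
    · filter_upwards with h
      exact div_nonneg (norm_nonneg _) (norm_nonneg _)
    · filter_upwards [self_mem_nhdsWithin] with h hh
      exact key h hh
  · -- derivative value
    have h1 := aux_double A B A' B' hAB hA'B' 1
    calc (∑' j, A j * d * B j) = ∑' j, A j * (∑' i, A' i * 1 * B' i) * B j := by
          rw [hd]; simp only [mul_one]
      _ = ∑' n : ℕ, (A (pairE n).1 * A' (pairE n).2) * 1 *
            (B' (pairE n).2 * B (pairE n).1) := h1.symm
      _ = ∑' n : ℕ, (A (pairE n).1 * A' (pairE n).2) *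
            (B' (pairE n).2 * B (pairE n).1) := by simp only [mul_one]
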